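/- Let ω ∈ ℝ and K, T > 0 satisfy ω > 2KT, and let μ0 ∈ (0,1/2) be such that f̄ attains its minimum over [0,1] exactly at μ0 and μ1 := 1−μ0. Then f̄ is nonincreasing on the interval [0, μ0], nondecreasing on [μ0, 1/2], nonincreasing on [1/2, μ1], and nondecreasing on [μ1, 1]. -/

import Mathlib

open Real Set

/-- The chemical free energy density `f̄(s) = ω s(1-s) + K T (s log s + (1-s) log (1-s))`.
Since `Real.log 0 = 0`, this formula automatically realizes the continuous extension
`f̄(0) = f̄(1) = 0`. -/
noncomputable def fbar (ω K T : ℝ) (s : ℝ) : ℝ :=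
  ω * s * (1 - s) + K * T * (s * Real.log s + (1 - s) * Real.log (1 - s))

/-- First derivative of `fbar` on `(0,1)`. -/
noncomputable def fbarD (ω K T s : ℝ) : ℝ :=
  ω * (1 - 2 * s) + K * T * (Real.log s - Real.log (1 - s))

/-- Second derivative of `fbar` on `(0,1)`. -/
noncomputable def fbarDD (ω K T s : ℝ) : ℝ :=
  -(2 * ω) + K * T * (s⁻¹ + (1 - s)⁻¹)

lemma fbar_hasDerivAt (ω K T : ℝ) {s : ℝ} (h0 : 0 < s) (h1 : s < 1) :
    HasDerivAt (fbar ω K T) (fbarD ω K T s) s := by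
  have hs : s ≠ 0 := ne_of_gt h0
  have hs1 : (1 : ℝ) - s ≠ 0 := ne_of_gt (by linarith)
  have hu : HasDerivAt (fun t : ℝ => 1 - t) (-1) s := by
    exact (hasDerivAt_id' s).const_sub 1
  have dP : HasDerivAt (fun t : ℝ => ω * t * (1 - t))
      (ω * 1 * (1 - s) + ω * s * (-1)) s :=
    (((hasDerivAt_id s).const_mul ω).mul hu)
  have dlog1 : HasDerivAt (fun t : ℝ => t * Real.log t) (1 * Real.log s + s * s⁻¹) s :=
    (hasDerivAt_id s).mul (Real.hasDerivAt_log hs)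
  have dlogc : HasDerivAt (fun t : ℝ => Real.log (1 - t)) ((1 - s)⁻¹ * (-1)) s :=
    (Real.hasDerivAt_log hs1).comp s hu
  have dlog2 : HasDerivAt (fun t : ℝ => (1 - t) * Real.log (1 - t))
      ((-1) * Real.log (1 - s) + (1 - s) * ((1 - s)⁻¹ * (-1))) s := hu.mul dlogc
  have := dP.add ((dlog1.add dlog2).const_mul (K * T))
  refine this.congr_deriv ?_
  rw [fbarD, mul_inv_cancel₀ hs, mul_inv_cancel_left₀ hs1]
  ring

lemma fbarD_hasDerivAt (ω K T : ℝ) {s : ℝ} (h0 : 0 < s) (h1 : s < 1) :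
    HasDerivAt (fbarD ω K T) (fbarDD ω K T s) s := by
  have hs : s ≠ 0 := ne_of_gt h0
  have hs1 : (1 : ℝ) - s ≠ 0 := ne_of_gt (by linarith)
  have hu : HasDerivAt (fun t : ℝ => 1 - t) (-1) s := by
    exact (hasDerivAt_id' s).const_sub 1
  have d1 : HasDerivAt (fun t : ℝ => ω * (1 - 2 * t)) (ω * (-2)) s := by
    have : HasDerivAt (fun t : ℝ => 1 - 2 * t) (-2) s := by
      exact (((hasDerivAt_id' s).const_mul 2).const_sub 1).congr_deriv (by ring)
    simpa using this.const_mul ω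
  have dlogc : HasDerivAt (fun t : ℝ => Real.log (1 - t)) ((1 - s)⁻¹ * (-1)) s :=
    (Real.hasDerivAt_log hs1).comp s hu
  have d2 : HasDerivAt (fun t : ℝ => Real.log t - Real.log (1 - t))
      (s⁻¹ - (1 - s)⁻¹ * (-1)) s := (Real.hasDerivAt_log hs).sub dlogc
  have := d1.add (d2.const_mul (K * T))
  refine this.congr_deriv ?_
  rw [fbarDD]; ring

lemma fbar_symm (ω K T s : ℝ) : fbar ω K T (1 - s) = fbar ω K T s := by
  unfold fbar
  rw [sub_sub_cancel]
  ring

lemma fbar_continuous (ω K T : ℝ) : Continuous (fbar ω K T) := by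
  unfold fbar
  exact ((continuous_const.mul continuous_id).mul (continuous_const.sub continuous_id)).add
    (continuous_const.mul (Real.continuous_mul_log.add
      (Real.continuous_mul_log.comp (continuous_const.sub continuous_id))))

lemma fbarD_half (ω K T : ℝ) : fbarD ω K T (1/2) = 0 := by
  unfold fbarD
  norm_num

/-- Rolle between two zeros of `fbarD` inside `(0,1)`. -/
lemma rolle_zero (ω K T : ℝ) {a b : ℝ} (h0 : 0 < a) (hab : a < b) (h1 : b < 1)
    (ha : fbarD ω K T a = 0) (hb : fbarD ω K T b = 0) :
    ∃ t ∈ Ioo a b, fbarDD ω K T t = 0 := by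
  have hd : ∀ x ∈ Ioo a b, HasDerivAt (fbarD ω K T) (fbarDD ω K T x) x := fun x hx =>
    fbarD_hasDerivAt ω K T (lt_trans h0 hx.1) (lt_trans hx.2 h1)
  have hc : ContinuousOn (fbarD ω K T) (Icc a b) := fun x hx =>
    (fbarD_hasDerivAt ω K T (lt_of_lt_of_le h0 hx.1)
      (lt_of_le_of_lt hx.2 h1)).continuousAt.continuousWithinAt
  exact exists_hasDerivAt_eq_zero hab hc (ha.trans hb.symm) hd

lemma second_zero (ω K T : ℝ) {t : ℝ} (h0 : 0 < t) (h1 : t < 1)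
    (hz : fbarDD ω K T t = 0) : 2 * ω * (t * (1 - t)) = K * T := by
  have hs : t ≠ 0 := ne_of_gt h0
  have hs1 : (1 : ℝ) - t ≠ 0 := ne_of_gt (by linarith)
  unfold fbarDD at hz
  field_simp at hz
  nlinarith [hz]

/-- `μ0` is the only zero of `fbarD` in `(0, 1/2)`. -/
lemma key_unique (ω K T : ℝ) (hK : 0 < K) (hT : 0 < T) (hω : 2 * K * T < ω)
    {μ0 : ℝ} (hμ : μ0 ∈ Ioo (0:ℝ) (1/2)) (hz : fbarD ω K T μ0 = 0)
    {x : ℝ} (hx : x ∈ Ioo (0:ℝ) (1/2)) (hne : x ≠ μ0) : fbarD ω K T x ≠ 0 := by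
  intro hzx
  have hKT : 0 < K * T := mul_pos hK hT
  have hωpos : 0 < ω := by nlinarith
  obtain ⟨a, b, ha0, hab, hb, haz, hbz⟩ :
      ∃ a b : ℝ, 0 < a ∧ a < b ∧ b < 1/2 ∧ fbarD ω K T a = 0 ∧ fbarD ω K T b = 0 := by
    rcases lt_or_gt_of_ne hne with h | h
    · exact ⟨x, μ0, hx.1, h, hμ.2, hzx, hz⟩
    · exact ⟨μ0, x, hμ.1, h, hx.2, hz, hzx⟩
  obtain ⟨t1, ht1, ht1z⟩ := rolle_zero ω K T ha0 hab (by linarith) haz hbz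
  obtain ⟨t2, ht2, ht2z⟩ := rolle_zero ω K T (by linarith : (0:ℝ) < b) hb (by norm_num)
    hbz (fbarD_half ω K T)
  have e1 := second_zero ω K T (by linarith [ht1.1] : 0 < t1) (by linarith [ht1.2] : t1 < 1) ht1z
  have e2 := second_zero ω K T (by linarith [ht2.1] : 0 < t2) (by linarith [ht2.2] : t2 < 1) ht2z
  have h12 : t1 < t2 := lt_trans ht1.2 ht2.1
  have hsum : t1 + t2 < 1 := by linarith [ht1.2, ht2.2]
  nlinarith [e1, e2, mul_pos (mul_pos hωpos (sub_pos.mpr h12)) (sub_pos.mpr hsum)]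

/-- If `ω > 2KT` and `f̄` attains its minimum over `[0,1]` exactly at `μ0 ∈ (0,1/2)` and
`μ1 = 1 - μ0`, then `f̄` is nonincreasing on `[0,μ0]`, nondecreasing on `[μ0,1/2]`,
nonincreasing on `[1/2,μ1]`, and nondecreasing on `[μ1,1]`. -/
theorem monotonicity_intervals (ω K T : ℝ) (hK : 0 < K) (hT : 0 < T)
    (hω : 2 * K * T < ω) (μ0 : ℝ) (hμ0 : μ0 ∈ Set.Ioo (0 : ℝ) (1 / 2))
    (hval : fbar ω K T μ0 = fbar ω K T (1 - μ0))
    (hmin : ∀ s ∈ Set.Icc (0 : ℝ) 1, s ≠ μ0 → s ≠ 1 - μ0 →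
      fbar ω K T μ0 < fbar ω K T s) :
    AntitoneOn (fbar ω K T) (Set.Icc 0 μ0) ∧
    MonotoneOn (fbar ω K T) (Set.Icc μ0 (1 / 2)) ∧
    AntitoneOn (fbar ω K T) (Set.Icc (1 / 2) (1 - μ0)) ∧
    MonotoneOn (fbar ω K T) (Set.Icc (1 - μ0) 1) := by
  obtain ⟨hμ0a, hμ0b⟩ := hμ0
  -- μ0 is a local minimum, so fbarD μ0 = 0
  have hloc : IsLocalMin (fbar ω K T) μ0 := by
    have hmem : Ioo (0:ℝ) 1 ∈ nhds μ0 := isOpen_Ioo.mem_nhds ⟨hμ0a, by linarith⟩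
    refine Filter.eventually_of_mem hmem fun s hs => ?_
    by_cases h1 : s = μ0
    · simp [h1]
    by_cases h2 : s = 1 - μ0
    · rw [h2, ← hval]
    · exact le_of_lt (hmin s ⟨hs.1.le, hs.2.le⟩ h1 h2)
  have hz : fbarD ω K T μ0 = 0 :=
    hloc.hasDerivAt_eq_zero (fbar_hasDerivAt ω K T hμ0a (by linarith))
  -- sign of fbarD on (0, μ0): negative
  have hneg : ∀ x ∈ Ioo (0:ℝ) μ0, fbarD ω K T x < 0 := by
    intro x hx
    have hxI : x ∈ Ioo (0:ℝ) (1/2) := ⟨hx.1, lt_trans hx.2 hμ0b⟩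
    rcases (key_unique ω K T hK hT hω ⟨hμ0a, hμ0b⟩ hz hxI (ne_of_lt hx.2)).lt_or_gt with
      h | h
    · exact h
    · exfalso
      -- fbarD > 0 on (x, μ0) by IVT + no-zeros
      have hpos : ∀ y ∈ Ioo x μ0, 0 < fbarD ω K T y := by
        intro y hy
        have hyI : y ∈ Ioo (0:ℝ) (1/2) := ⟨lt_trans hx.1 hy.1, lt_trans hy.2 hμ0b⟩
        rcases (key_unique ω K T hK hT hω ⟨hμ0a, hμ0b⟩ hz hyI (ne_of_lt hy.2)).lt_or_gt with
          hyn | hyp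
        · exfalso
          have hc : ContinuousOn (fbarD ω K T) (Icc x y) := fun z hz' =>
            (fbarD_hasDerivAt ω K T (lt_of_lt_of_le hx.1 hz'.1)
              (by nlinarith [hz'.2, hy.2, hμ0b] : (z:ℝ) < 1)).continuousAt.continuousWithinAt
          obtain ⟨c, hc1, hc2⟩ := intermediate_value_Ioo' (le_of_lt hy.1) hc ⟨hyn, h⟩
          exact key_unique ω K T hK hT hω ⟨hμ0a, hμ0b⟩ hz
            ⟨lt_trans hx.1 hc1.1, by linarith [hc1.2, hy.2, hμ0b]⟩
            (by linarith [hc1.2, hy.2] : c ≠ μ0) hc2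
        · exact hyp
      have hsm : StrictMonoOn (fbar ω K T) (Icc x μ0) := by
        refine strictMonoOn_of_deriv_pos (convex_Icc x μ0)
          ((fbar_continuous ω K T).continuousOn) fun y hy => ?_
        rw [interior_Icc] at hy
        rw [(fbar_hasDerivAt ω K T (lt_trans hx.1 hy.1)
          (by linarith [hy.2] : y < 1)).deriv]
        exact hpos y hy
      have h1 : fbar ω K T x < fbar ω K T μ0 :=
        hsm ⟨le_refl x, hx.2.le⟩ ⟨hx.2.le, le_refl μ0⟩ hx.2
      have h2 : fbar ω K T μ0 < fbar ω K T x :=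
        hmin x ⟨hx.1.le, by linarith [hx.2]⟩ (ne_of_lt hx.2) (by linarith [hx.2])
      linarith
  -- sign of fbarD on (μ0, 1/2): positive
  have hpos2 : ∀ x ∈ Ioo μ0 (1/2), 0 < fbarD ω K T x := by
    intro x hx
    have hxI : x ∈ Ioo (0:ℝ) (1/2) := ⟨lt_trans hμ0a hx.1, hx.2⟩
    rcases (key_unique ω K T hK hT hω ⟨hμ0a, hμ0b⟩ hz hxI (ne_of_gt hx.1)).lt_or_gt with
      h | h
    · exfalso
      have hneg2 : ∀ y ∈ Ioo μ0 x, fbarD ω K T y < 0 := by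
        intro y hy
        have hyI : y ∈ Ioo (0:ℝ) (1/2) := ⟨lt_trans hμ0a hy.1, lt_trans hy.2 hx.2⟩
        rcases (key_unique ω K T hK hT hω ⟨hμ0a, hμ0b⟩ hz hyI (ne_of_gt hy.1)).lt_or_gt with
          hyn | hyp
        · exact hyn
        · exfalso
          have hc : ContinuousOn (fbarD ω K T) (Icc y x) := fun z hz' =>
            (fbarD_hasDerivAt ω K T (lt_of_lt_of_le hyI.1 hz'.1)
              (by linarith [hz'.2, hx.2] : (z:ℝ) < 1)).continuousAt.continuousWithinAt
          obtain ⟨c, hc1, hc2⟩ := intermediate_value_Ioo' (le_of_lt hy.2) hc ⟨h, hyp⟩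
          exact key_unique ω K T hK hT hω ⟨hμ0a, hμ0b⟩ hz
            ⟨lt_trans hyI.1 hc1.1, lt_trans hc1.2 hx.2⟩
            (by linarith [hc1.1, hy.1] : c ≠ μ0) hc2
      have hsa : StrictAntiOn (fbar ω K T) (Icc μ0 x) := by
        refine strictAntiOn_of_deriv_neg (convex_Icc μ0 x)
          ((fbar_continuous ω K T).continuousOn) fun y hy => ?_
        rw [interior_Icc] at hy
        rw [(fbar_hasDerivAt ω K T (lt_trans hμ0a hy.1)
          (by linarith [hy.2, hx.2] : y < 1)).deriv]
        exact hneg2 y hy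
      have h1 : fbar ω K T x < fbar ω K T μ0 :=
        hsa ⟨le_refl μ0, hx.1.le⟩ ⟨hx.1.le, le_refl x⟩ hx.1
      have h2 : fbar ω K T μ0 < fbar ω K T x :=
        hmin x ⟨by linarith [hx.1], by linarith [hx.2]⟩ (ne_of_gt hx.1)
          (by linarith [hx.2] : x ≠ 1 - μ0)
      linarith
    · exact h
  -- assemble the four monotonicity statements
  have A1 : AntitoneOn (fbar ω K T) (Icc 0 μ0) := by
    refine antitoneOn_of_deriv_nonpos (convex_Icc 0 μ0)
      ((fbar_continuous ω K T).continuousOn) (fun y hy => ?_) (fun y hy => ?_)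
    · rw [interior_Icc] at hy
      exact (fbar_hasDerivAt ω K T hy.1
        (by linarith [hy.2] : y < 1)).differentiableAt.differentiableWithinAt
    · rw [interior_Icc] at hy
      rw [(fbar_hasDerivAt ω K T hy.1 (by linarith [hy.2] : y < 1)).deriv]
      exact le_of_lt (hneg y hy)
  have A2 : MonotoneOn (fbar ω K T) (Icc μ0 (1/2)) := by
    refine monotoneOn_of_deriv_nonneg (convex_Icc μ0 (1/2))
      ((fbar_continuous ω K T).continuousOn) (fun y hy => ?_) (fun y hy => ?_)
    · rw [interior_Icc] at hy
      exact (fbar_hasDerivAt ω K T (lt_trans hμ0a hy.1)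
        (by linarith [hy.2] : y < 1)).differentiableAt.differentiableWithinAt
    · rw [interior_Icc] at hy
      rw [(fbar_hasDerivAt ω K T (lt_trans hμ0a hy.1)
        (by linarith [hy.2] : y < 1)).deriv]
      exact le_of_lt (hpos2 y hy)
  refine ⟨A1, A2, ?_, ?_⟩
  · intro x hx y hy hxy
    have h := A2 (show 1 - y ∈ Icc μ0 (1/2) from ⟨by linarith [hy.2], by linarith [hy.1]⟩)
      (show 1 - x ∈ Icc μ0 (1/2) from ⟨by linarith [hx.2], by linarith [hx.1]⟩) (by linarith)
    rwa [fbar_symm, fbar_symm] at h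
  · intro x hx y hy hxy
    have h := A1 (show 1 - y ∈ Icc 0 μ0 from ⟨by linarith [hy.2], by linarith [hy.1]⟩)
      (show 1 - x ∈ Icc 0 μ0 from ⟨by linarith [hx.2], by linarith [hx.1]⟩) (by linarith)
    rwa [fbar_symm, fbar_symm] at h
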